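/- Let $A, E \in \mathbb{R}^{n\times n}$ and $B \in \mathbb{R}^{n\times m}$, and let $B = Q_1 R$ with $Q = [Q_1\ Q_2] \in \mathbb{R}^{n\times n}$ orthogonal, $Q_1 \in \mathbb{R}^{n\times m}$, and $R \in \mathbb{R}^{m\times m}$ invertible. If for some $\lambda \in \mathbb{C}$ the matrix $[\lambda E - A\ \ B]$ has full row rank $n$, then $Q_2^\top(\lambda E - A) \in \mathbb{C}^{(n-m)\times n}$ has full row rank $n-m$. -/

import Mathlib

open Matrix

/-- A matrix whose rank equals the cardinality of its row index has linearly
independent rows. -/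
lemma rank_eq_card_rows_linearIndependent {p q : Type*} [Fintype p] [Fintype q]
    (M : Matrix p q ℂ) (h : M.rank = Fintype.card p) :
    LinearIndependent ℂ (fun i => M i) := by
  rw [linearIndependent_iff_card_eq_finrank_span, Set.finrank]
  change _ = Module.finrank ℂ (Submodule.span ℂ (Set.range M.row))
  rw [← Matrix.rank_eq_finrank_span_row, h]

/-- if `[λE - A  B]` has full row rank `n`, then `Q₂ᵀ(λE - A)` has
full row rank `n - m` (here `k = n - m`). -/
theorem stmt0 {n m k : ℕ} (hk : m + k = n)
    (A E : Matrix (Fin n) (Fin n) ℝ) (B : Matrix (Fin n) (Fin m) ℝ)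
    (Q1 : Matrix (Fin n) (Fin m) ℝ) (Q2 : Matrix (Fin n) (Fin k) ℝ)
    (R : Matrix (Fin m) (Fin m) ℝ)
    (hQ : (fromCols Q1 Q2)ᵀ * fromCols Q1 Q2 = 1)
    (hQ' : fromCols Q1 Q2 * (fromCols Q1 Q2)ᵀ = 1)
    (hB : B = Q1 * R) (hR : IsUnit R.det)
    (lam : ℂ)
    (hrank : (fromCols (lam • E.map Complex.ofReal - A.map Complex.ofReal)
        (B.map Complex.ofReal)).rank = n) :
    ((Q2.map Complex.ofReal)ᵀ *
      (lam • E.map Complex.ofReal - A.map Complex.ofReal)).rank = k := by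
  classical
  set M : Matrix (Fin n) (Fin n) ℂ :=
    lam • E.map Complex.ofReal - A.map Complex.ofReal with hM
  set N : Matrix (Fin n) (Fin n ⊕ Fin m) ℂ :=
    fromCols M (B.map Complex.ofReal) with hN
  -- block identities from orthogonality
  rw [transpose_fromCols, fromRows_mul_fromCols] at hQ
  have h21 : Q2ᵀ * Q1 = 0 := by
    ext i j
    have := congrFun (congrFun hQ (Sum.inr i)) (Sum.inl j)
    simpa [Matrix.one_apply] using this
  have h22 : Q2ᵀ * Q2 = 1 := by
    ext i j
    have := congrFun (congrFun hQ (Sum.inr i)) (Sum.inr j)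
    simpa [Matrix.one_apply, Sum.inr.injEq] using this
  -- complexified identities
  have h21c : (Q2.map Complex.ofReal)ᵀ * (Q1.map Complex.ofReal) = 0 := by
    have := congrArg (fun X => X.map (Complex.ofRealHom : ℝ →+* ℂ)) h21
    simp only [Matrix.map_mul, Matrix.transpose_map, Matrix.map_zero, Matrix.map_one,
      map_zero, map_one] at this
    exact this
  have h22c : (Q2.map Complex.ofReal)ᵀ * (Q2.map Complex.ofReal) = 1 := by
    have := congrArg (fun X => X.map (Complex.ofRealHom : ℝ →+* ℂ)) h22
    simp only [Matrix.map_mul, Matrix.transpose_map, Matrix.map_zero, Matrix.map_one,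
      map_zero, map_one] at this
    exact this
  have hBc : B.map Complex.ofReal =
      (Q1.map Complex.ofReal) * (R.map Complex.ofReal) := by
    have := congrArg (fun X => X.map (Complex.ofRealHom : ℝ →+* ℂ)) hB
    simp only [Matrix.map_mul] at this
    exact this
  -- rows of N are linearly independent, hence vecMul by N is injective
  have hLI : LinearIndependent ℂ (fun i => N i) :=
    rank_eq_card_rows_linearIndependent N (by simpa using hrank)
  have hNinj : Function.Injective N.vecMul := Matrix.vecMul_injective_iff.mpr hLI
  -- key: left kernel of Q2ᵀ M is trivial
  have key : ∀ v : Fin k → ℂ, v ᵥ* ((Q2.map Complex.ofReal)ᵀ * M) = 0 → v = 0 := by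
    intro v hv
    set w : Fin n → ℂ := v ᵥ* (Q2.map Complex.ofReal)ᵀ with hw
    have hwM : w ᵥ* M = 0 := by
      rw [hw, Matrix.vecMul_vecMul]; exact hv
    have hwB : w ᵥ* (B.map Complex.ofReal) = 0 := by
      rw [hBc, hw, Matrix.vecMul_vecMul, ← Matrix.mul_assoc, h21c, Matrix.zero_mul,
        Matrix.vecMul_zero]
    have hwN : w ᵥ* N = 0 := by
      rw [hN, vecMul_fromCols, hwM, hwB]
      ext (_ | _) <;> rfl
    have hw0 : w = 0 := by
      apply hNinj
      simpa using hwN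
    have : v ᵥ* ((Q2.map Complex.ofReal)ᵀ * (Q2.map Complex.ofReal)) = 0 := by
      rw [← Matrix.vecMul_vecMul, ← hw, hw0]
      simp
    rwa [h22c, Matrix.vecMul_one] at this
  -- conclude linear independence of the rows of Q2ᵀ M
  have hinj : Function.Injective ((Q2.map Complex.ofReal)ᵀ * M).vecMul := by
    intro v1 v2 h
    have h' : v1 ᵥ* ((Q2.map Complex.ofReal)ᵀ * M)
        = v2 ᵥ* ((Q2.map Complex.ofReal)ᵀ * M) := h
    have : (v1 - v2) ᵥ* ((Q2.map Complex.ofReal)ᵀ * M) = 0 := by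
      rw [Matrix.sub_vecMul, h', sub_self]
    have := key _ this
    exact sub_eq_zero.mp this
  have hLI2 : LinearIndependent ℂ (fun i => ((Q2.map Complex.ofReal)ᵀ * M) i) :=
    Matrix.vecMul_injective_iff.mp hinj
  have := hLI2.rank_matrix
  simpa using this
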